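/- For all complex numbers z, z' and all Young diagrams μ, λ with m := |μ| ≥ 1 and n := |λ|, one has ∑_{λ• : λ• ↘ λ} (z)_{λ•/λ} (z')_{λ•/λ} · dim(μ, λ•) = ∑_{μ• : μ• ↗ μ} (z)_{μ/μ•} (z')_{μ/μ•} · dim(μ•, λ) + (n + zz' + m)(n − m + 1) · dim(μ, λ). -/
import Mathlib


/-- `μ ↗ ν` : the Young diagram `ν` is obtained from `μ` by adding one box. -/
def YoungDiagram.Covers (μ ν : YoungDiagram) : Prop :=
  μ ≤ ν ∧ ν.card = μ.card + 1

/-- `dim(μ,λ)`: the number of saturated chains `μ = ν₀ ↗ ν₁ ↗ … ↗ ν_{|λ|-|μ|} = λ`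
(the number of standard Young tableaux of skew shape `λ/μ`); it vanishes when `μ ⊄ λ`. -/
noncomputable def YoungDiagram.skewDim (μ l : YoungDiagram) : ℕ :=
  Nat.card {f : Fin (l.card - μ.card + 1) → YoungDiagram //
    f 0 = μ ∧ f (Fin.last _) = l ∧
    ∀ i : Fin (l.card - μ.card), YoungDiagram.Covers (f i.castSucc) (f i.succ)}

/-- `(w)_{λ/μ} = ∏_{(i,j) ∈ λ∖μ} (w + j - i)`, the product of `w` shifted by the contents
of the boxes of the skew diagram `λ/μ`. -/
noncomputable def YoungDiagram.poch (w : ℂ) (μ l : YoungDiagram) : ℂ :=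
  ∏ b ∈ l.cells \ μ.cells, (w + (b.2 : ℂ) - (b.1 : ℂ))

namespace YoungDiagram

lemma colLen_zero_le_card (μ : YoungDiagram) : μ.colLen 0 ≤ μ.card := by
  rw [colLen_eq_card]
  exact Finset.card_le_card (fun c hc => (mem_col_iff.1 hc).1)

lemma rowLen_card_eq_zero (μ : YoungDiagram) : μ.rowLen μ.card = 0 := by
  by_contra h
  have h0 : (μ.card, 0) ∈ μ := mem_iff_lt_rowLen.2 (Nat.pos_of_ne_zero h)
  have := mem_iff_lt_colLen.1 h0
  have := μ.colLen_zero_le_card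
  omega

/-- The candidate new cell in row `i` can be added iff this holds. -/
def AddableRow (μ : YoungDiagram) (i : ℕ) : Prop := i = 0 ∨ μ.rowLen i < μ.rowLen (i-1)

instance (μ : YoungDiagram) (i : ℕ) : Decidable (μ.AddableRow i) := by
  unfold AddableRow; infer_instance

def RemovableRow (μ : YoungDiagram) (i : ℕ) : Prop := μ.rowLen (i+1) < μ.rowLen i

instance (μ : YoungDiagram) (i : ℕ) : Decidable (μ.RemovableRow i) := by
  unfold RemovableRow; infer_instance

/-- Adding a box at the end of row `i` (junk value if not addable). -/
def addBox (μ : YoungDiagram) (i : ℕ) : YoungDiagram where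
  cells := if μ.AddableRow i then insert (i, μ.rowLen i) μ.cells else μ.cells
  isLowerSet := by
    split_ifs with hA
    · rintro ⟨c1, c2⟩ ⟨a, b⟩ ⟨(h1 : a ≤ c1), (h2 : b ≤ c2)⟩ hc
      simp only [Finset.coe_insert, Set.mem_insert_iff, Finset.mem_coe, mem_cells] at hc ⊢
      rcases hc with hc | hc
      · obtain ⟨rfl, rfl⟩ : c1 = i ∧ c2 = μ.rowLen i := Prod.mk.injEq .. ▸ hc
        rcases lt_or_eq_of_le h2 with h2 | h2
        · right
          exact mem_iff_lt_rowLen.2 (lt_of_lt_of_le h2 (μ.rowLen_anti _ _ h1))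
        · subst h2
          rcases lt_or_eq_of_le h1 with h1 | h1
          · right
            refine mem_iff_lt_rowLen.2 ?_
            rcases hA with rfl | hA
            · omega
            · exact lt_of_lt_of_le hA (μ.rowLen_anti _ _ (by omega))
          · left; simp [h1]
      · right
        exact μ.up_left_mem h1 h2 hc
    · exact μ.isLowerSet

/-- Removing the last box of row `i` (junk value if not removable). -/
def delBox (μ : YoungDiagram) (i : ℕ) : YoungDiagram where
  cells := if μ.RemovableRow i then μ.cells.erase (i, μ.rowLen i - 1) else μ.cells
  isLowerSet := by
    split_ifs with hR
    · rintro ⟨c1, c2⟩ ⟨a, b⟩ ⟨(h1 : a ≤ c1), (h2 : b ≤ c2)⟩ hc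
      simp only [Finset.coe_erase, Set.mem_diff, Finset.mem_coe, mem_cells,
        Set.mem_singleton_iff] at hc ⊢
      obtain ⟨hcμ, hcne⟩ := hc
      refine ⟨μ.up_left_mem h1 h2 hcμ, ?_⟩
      intro heq
      rw [Prod.mk.injEq] at heq
      obtain ⟨h3, h4⟩ := heq
      have hcne' : ¬(c1 = i ∧ c2 = μ.rowLen i - 1) := by simpa [Prod.mk.injEq] using hcne
      have hc2 : c2 < μ.rowLen c1 := mem_iff_lt_rowLen.1 hcμ
      have hac : μ.rowLen c1 ≤ μ.rowLen i := μ.rowLen_anti _ _ (by omega)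
      unfold RemovableRow at hR
      rcases Nat.eq_or_lt_of_le h1 with heq2 | h1'
      · exact hcne' (by omega)
      · have h5 : μ.rowLen c1 ≤ μ.rowLen (i+1) := μ.rowLen_anti _ _ (by omega)
        omega
    · exact μ.isLowerSet

instance : DecidableEq YoungDiagram :=
  fun _ _ => decidable_of_iff _ (YoungDiagram.ext_iff).symm

lemma cells_addBox {μ : YoungDiagram} {i : ℕ} (h : μ.AddableRow i) :
    (μ.addBox i).cells = insert (i, μ.rowLen i) μ.cells := by
  simp [addBox, h]

lemma cells_delBox {μ : YoungDiagram} {i : ℕ} (h : μ.RemovableRow i) :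
    (μ.delBox i).cells = μ.cells.erase (i, μ.rowLen i - 1) := by
  simp [delBox, h]

lemma new_cell_notMem (μ : YoungDiagram) (i : ℕ) : (i, μ.rowLen i) ∉ μ := by
  simp [mem_iff_lt_rowLen]

lemma covers_addBox {μ : YoungDiagram} {i : ℕ} (h : μ.AddableRow i) :
    Covers μ (μ.addBox i) := by
  constructor
  · rw [← cells_subset_iff, cells_addBox h]
    exact Finset.subset_insert _ _
  · show (μ.addBox i).cells.card = _
    rw [cells_addBox h, Finset.card_insert_of_notMem (by simpa [mem_cells] using μ.new_cell_notMem i)]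

lemma del_cell_mem {μ : YoungDiagram} {i : ℕ} (h : μ.RemovableRow i) :
    (i, μ.rowLen i - 1) ∈ μ := by
  have : 0 < μ.rowLen i := by unfold RemovableRow at h; omega
  exact mem_iff_lt_rowLen.2 (by omega)

lemma covers_delBox {μ : YoungDiagram} {i : ℕ} (h : μ.RemovableRow i) :
    Covers (μ.delBox i) μ := by
  constructor
  · rw [← cells_subset_iff, cells_delBox h]
    exact Finset.erase_subset _ _
  · show μ.cells.card = (μ.delBox i).cells.card + 1
    rw [cells_delBox h, Finset.card_erase_of_mem (by simpa [mem_cells] using del_cell_mem h)]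
    have : 0 < μ.cells.card := Finset.card_pos.2 ⟨_, (mem_cells _).2 (del_cell_mem h)⟩
    omega

/-- The finset of diagrams covering `μ`. -/
def covA (μ : YoungDiagram) : Finset YoungDiagram :=
  ((Finset.range (μ.card + 1)).filter fun i => μ.AddableRow i).image μ.addBox

/-- The finset of diagrams covered by `μ`. -/
def covD (μ : YoungDiagram) : Finset YoungDiagram :=
  ((Finset.range (μ.card + 1)).filter fun i => μ.RemovableRow i).image μ.delBox

lemma addable_le_card {μ : YoungDiagram} {i : ℕ} (h : μ.AddableRow i) : i ≤ μ.card := by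
  rcases h with rfl | h
  · omega
  · have h1 : (i - 1, 0) ∈ μ := mem_iff_lt_rowLen.2 (by omega)
    have h2 := mem_iff_lt_colLen.1 h1
    have h3 := μ.colLen_zero_le_card
    have h4 : μ.colLen 0 ≥ μ.colLen 0 := le_refl _
    have h5 : i - 1 < μ.colLen 0 := h2
    rcases Nat.eq_zero_or_pos i with rfl | hi
    · omega
    · omega

lemma removable_le_card {μ : YoungDiagram} {i : ℕ} (h : μ.RemovableRow i) : i ≤ μ.card := by
  have h1 : (i, 0) ∈ μ := mem_iff_lt_rowLen.2 (by unfold RemovableRow at h; omega)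
  have h2 := mem_iff_lt_colLen.1 h1
  have h3 := μ.colLen_zero_le_card
  omega

lemma mem_covA {μ ν : YoungDiagram} : ν ∈ covA μ ↔ Covers μ ν := by
  constructor
  · intro h
    first | unfold covA at h | unfold covD at h
    obtain ⟨i, hi, rfl⟩ := Finset.mem_image.1 h
    exact covers_addBox (Finset.mem_filter.1 hi).2
  · rintro ⟨hle, hcard⟩
    have hss : μ.cells ⊆ ν.cells := cells_subset_iff.2 hle
    have hc1 : (ν.cells \ μ.cells).card = 1 := by
      have hcard' : ν.cells.card = μ.cells.card + 1 := hcard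
      rw [Finset.card_sdiff_of_subset hss]; omega
    obtain ⟨c, hc⟩ := Finset.card_eq_one.1 hc1
    obtain ⟨i, j⟩ := c
    have hcells : ν.cells = insert (i, j) μ.cells := by
      rw [← Finset.union_sdiff_of_subset hss, hc]
      ext x; simp [or_comm]
    have hmemν : (i, j) ∈ ν := by rw [← mem_cells, hcells]; exact Finset.mem_insert_self _ _
    have hnotμ : (i, j) ∉ μ := by
      intro hmem
      have : (i,j) ∈ ν.cells \ μ.cells := hc ▸ Finset.mem_singleton_self _
      simp [mem_cells, hmem] at this
    have hjge : μ.rowLen i ≤ j := by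
      by_contra hlt
      exact hnotμ (mem_iff_lt_rowLen.2 (by omega))
    have hjle : j ≤ μ.rowLen i := by
      rcases Nat.eq_zero_or_pos j with rfl | hj
      · omega
      · have : (i, j-1) ∈ ν := ν.up_left_mem (le_refl i) (by omega) hmemν
        have hne : (i, j-1) ≠ (i, j) := by simp; omega
        have : (i, j-1) ∈ μ := by
          have := (mem_cells _).2 this
          rw [hcells] at this
          rcases Finset.mem_insert.1 this with h | h
          · exact absurd h hne
          · exact (mem_cells _).1 h
        have := mem_iff_lt_rowLen.1 this
        omega
    have hj : j = μ.rowLen i := le_antisymm hjle hjge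
    subst hj
    have hadd : μ.AddableRow i := by
      rcases Nat.eq_zero_or_pos i with rfl | hi
      · exact Or.inl rfl
      · refine Or.inr ?_
        have : (i-1, μ.rowLen i) ∈ ν := ν.up_left_mem (by omega) (le_refl _) hmemν
        have hne : (i-1, μ.rowLen i) ≠ (i, μ.rowLen i) := by simp; omega
        have : (i-1, μ.rowLen i) ∈ μ := by
          have := (mem_cells _).2 this
          rw [hcells] at this
          rcases Finset.mem_insert.1 this with h | h
          · exact absurd h hne
          · exact (mem_cells _).1 h
        exact mem_iff_lt_rowLen.1 this
    first | unfold covA | unfold covD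
    refine Finset.mem_image.2 ⟨i, Finset.mem_filter.2 ⟨Finset.mem_range.2 ?_, hadd⟩, ?_⟩
    · have := addable_le_card hadd; omega
    · ext x
      simp only [← mem_cells, cells_addBox hadd, hcells]

lemma mem_covD {κ μ : YoungDiagram} : κ ∈ covD μ ↔ Covers κ μ := by
  constructor
  · intro h
    first | unfold covA at h | unfold covD at h
    obtain ⟨i, hi, rfl⟩ := Finset.mem_image.1 h
    exact covers_delBox (Finset.mem_filter.1 hi).2
  · rintro ⟨hle, hcard⟩
    have hss : κ.cells ⊆ μ.cells := cells_subset_iff.2 hle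
    have hc1 : (μ.cells \ κ.cells).card = 1 := by
      have hcard' : μ.cells.card = κ.cells.card + 1 := hcard
      rw [Finset.card_sdiff_of_subset hss]; omega
    obtain ⟨c, hc⟩ := Finset.card_eq_one.1 hc1
    obtain ⟨i, j⟩ := c
    have hmemμ : (i, j) ∈ μ := by
      have : (i,j) ∈ μ.cells \ κ.cells := hc ▸ Finset.mem_singleton_self _
      exact (mem_cells _).1 (Finset.mem_sdiff.1 this).1
    have hnotκ : (i, j) ∉ κ := by
      have : (i,j) ∈ μ.cells \ κ.cells := hc ▸ Finset.mem_singleton_self _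
      simpa [mem_cells] using (Finset.mem_sdiff.1 this).2
    have hcells : κ.cells = μ.cells.erase (i, j) := by
      apply Finset.eq_of_subset_of_card_le
      · intro x hx
        refine Finset.mem_erase.2 ⟨?_, hss hx⟩
        rintro rfl; exact hnotκ ((mem_cells _).1 hx)
      · rw [Finset.card_erase_of_mem ((mem_cells _).2 hmemμ)]
        have hcard' : μ.cells.card = κ.cells.card + 1 := hcard
        omega
    -- other cells of μ, not equal to (i,j), are in κ
    have hother : ∀ x, x ∈ μ → x ≠ (i, j) → x ∈ κ := by
      intro x hx hne
      rw [← mem_cells, hcells]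
      exact Finset.mem_erase.2 ⟨hne, (mem_cells _).2 hx⟩
    have hjlt : j < μ.rowLen i := mem_iff_lt_rowLen.1 hmemμ
    have hj : j = μ.rowLen i - 1 := by
      by_contra hne
      have h1 : (i, j+1) ∈ μ := mem_iff_lt_rowLen.2 (by omega)
      have h2 : (i, j+1) ∈ κ := hother _ h1 (by simp)
      exact hnotκ (κ.up_left_mem (le_refl _) (by omega) h2)
    subst hj
    have hrem : μ.RemovableRow i := by
      unfold RemovableRow
      by_contra hno
      have hge : μ.rowLen i ≤ μ.rowLen (i+1) := by omega
      have h1 : (i+1, μ.rowLen i - 1) ∈ μ := mem_iff_lt_rowLen.2 (by omega)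
      have h2 : (i+1, μ.rowLen i - 1) ∈ κ := hother _ h1 (by simp)
      exact hnotκ (κ.up_left_mem (by omega) (le_refl _) h2)
    first | unfold covA | unfold covD
    refine Finset.mem_image.2 ⟨i, Finset.mem_filter.2 ⟨Finset.mem_range.2 ?_, hrem⟩, ?_⟩
    · have := removable_le_card hrem; omega
    · ext x
      simp only [← mem_cells, cells_delBox hrem, hcells]


/-! ### Chain counting -/

/-- Chains of length `a` from `μ` to `l`. -/
def Chn (a : ℕ) (μ l : YoungDiagram) : Type :=
  {f : Fin (a + 1) → YoungDiagram //
    f 0 = μ ∧ f (Fin.last a) = l ∧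
    ∀ i : Fin a, Covers (f i.castSucc) (f i.succ)}

lemma covers_lt {μ ν : YoungDiagram} (h : Covers μ ν) : μ < ν :=
  lt_of_le_of_ne h.1 (by rintro rfl; have := h.2; omega)

lemma chn_le_top {a : ℕ} {μ l : YoungDiagram} (f : Chn a μ l) (i : Fin (a + 1)) :
    f.1 i ≤ l := by
  obtain ⟨f, h0, hl, hc⟩ := f
  have hmono : Monotone f := by
    have : StrictMono f ∨ a = 0 := by
      rcases Nat.eq_zero_or_pos a with rfl | ha
      · exact Or.inr rfl
      · exact Or.inl (Fin.strictMono_iff_lt_succ.2 fun i => covers_lt (hc i))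
    rcases this with h | rfl
    · exact h.monotone
    · intro x y _
      have hx : x = 0 := Fin.fin_one_eq_zero x
      have hy : y = 0 := Fin.fin_one_eq_zero y
      rw [hx, hy]
  calc f i ≤ f (Fin.last a) := hmono (Fin.le_last i)
    _ = l := hl

instance finite_le_subtype (l : YoungDiagram) : Finite {ν : YoungDiagram // ν ≤ l} := by
  refine Finite.of_injective
    (fun ν => (⟨ν.1.cells, Finset.mem_powerset.2 (cells_subset_iff.2 ν.2)⟩ :
      l.cells.powerset)) ?_
  rintro ⟨ν₁, h₁⟩ ⟨ν₂, h₂⟩ h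
  simp only [Subtype.mk.injEq] at h
  exact Subtype.ext (YoungDiagram.ext h)

instance chn_finite (a : ℕ) (μ l : YoungDiagram) : Finite (Chn a μ l) := by
  refine Finite.of_injective
    (fun f => (fun i => (⟨f.1 i ⊓ l, inf_le_right⟩ : {ν : YoungDiagram // ν ≤ l}) :
      Fin (a+1) → {ν : YoungDiagram // ν ≤ l})) ?_
  intro f g h
  apply Subtype.ext
  funext i
  have hf : f.1 i ⊓ l = f.1 i := inf_eq_left.2 (chn_le_top f i)
  have hg : g.1 i ⊓ l = g.1 i := inf_eq_left.2 (chn_le_top g i)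
  have := congrFun h i
  simp only [Subtype.mk.injEq] at this
  rw [hf, hg] at this
  exact this

/-- The number of chains of length `a` from `μ` to `l`. -/
noncomputable def nchains (a : ℕ) (μ l : YoungDiagram) : ℕ := Nat.card (Chn a μ l)

lemma skewDim_eq_nchains (μ l : YoungDiagram) :
    μ.skewDim l = nchains (l.card - μ.card) μ l := rfl

lemma nchains_zero (μ l : YoungDiagram) :
    nchains 0 μ l = if μ = l then 1 else 0 := by
  split_ifs with h
  · subst h
    have : Unique (Chn 0 μ μ) := by
      refine ⟨⟨⟨fun _ => μ, rfl, rfl, fun i => i.elim0⟩⟩, ?_⟩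
      rintro ⟨f, h0, hl, _⟩
      apply Subtype.ext
      funext x
      have hx : x = 0 := Fin.fin_one_eq_zero x
      simp [hx, h0]
    exact Nat.card_unique
  · have : IsEmpty (Chn 0 μ l) := by
      refine ⟨?_⟩
      rintro ⟨f, h0, hl, -⟩
      exact h (h0 ▸ (show (0 : Fin 1) = Fin.last 0 from rfl) ▸ hl)
    exact Nat.card_of_isEmpty

/-- Splitting a chain at its first step. -/
lemma nchains_succ (a : ℕ) (μ l : YoungDiagram) :
    nchains (a + 1) μ l = ∑ σ ∈ covA μ, nchains a σ l := by
  classical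
  haveI : Fintype (Chn (a+1) μ l) := Fintype.ofFinite _
  have key : ∀ f : Chn (a+1) μ l, f.1 1 ∈ covA μ := by
    rintro ⟨f, h0, hl, hc⟩
    refine mem_covA.2 ?_
    have := hc 0
    rwa [show (0 : Fin (a+1)).castSucc = 0 from rfl, show (0 : Fin (a+1)).succ = 1 from rfl,
      h0] at this
  have h1 : nchains (a+1) μ l = (Finset.univ : Finset (Chn (a+1) μ l)).card := by
    rw [nchains, Nat.card_eq_fintype_card, Finset.card_univ]
  rw [h1, Finset.card_eq_sum_card_fiberwise (f := fun f => f.1 1) (t := covA μ)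
    (fun f _ => key f)]
  refine Finset.sum_congr rfl fun σ hσ => ?_
  -- fiber over σ ≃ chains from σ
  have hcov : Covers μ σ := mem_covA.1 hσ
  have e : {f : Chn (a+1) μ l // f.1 1 = σ} ≃ Chn a σ l := by
    refine ⟨fun f => ⟨fun j => f.1.1 j.succ, ?_, ?_, ?_⟩,
      fun g => ⟨⟨Fin.cases μ g.1, ?_, ?_, ?_⟩, ?_⟩, ?_, ?_⟩
    · show f.1.1 (0 : Fin (a+1)).succ = σ
      rw [Fin.succ_zero_eq_one]; exact f.2
    · show f.1.1 (Fin.last a).succ = l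
      rw [Fin.succ_last]; exact f.1.2.2.1
    · intro i
      show Covers (f.1.1 i.castSucc.succ) (f.1.1 i.succ.succ)
      have := f.1.2.2.2 i.succ
      rwa [← Fin.succ_castSucc] at this
    · simp
    · beta_reduce
      rw [← Fin.succ_last, Fin.cases_succ]; exact g.2.2.1
    · intro i
      refine Fin.cases ?_ ?_ i
      · beta_reduce
        rw [Fin.castSucc_zero, Fin.succ_zero_eq_one, Fin.cases_zero,
          ← Fin.succ_zero_eq_one, Fin.cases_succ, g.2.1]
        exact hcov
      · intro j
        beta_reduce
        rw [← Fin.succ_castSucc, Fin.cases_succ, Fin.cases_succ]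
        exact g.2.2.2 j
    · show Fin.cases (motive := fun _ => YoungDiagram) μ g.1 1 = σ
      rw [← Fin.succ_zero_eq_one, Fin.cases_succ]
      exact g.2.1
    · rintro ⟨⟨f, h0, hl, hc⟩, hf1⟩
      apply Subtype.ext
      apply Subtype.ext
      funext x
      refine Fin.cases ?_ ?_ x
      · simpa using h0.symm
      · intro j; simp
    · rintro ⟨g, h0, hl, hc⟩
      apply Subtype.ext
      funext j
      simp
  haveI : Fintype (Chn a σ l) := Fintype.ofFinite _
  have h2 : nchains a σ l
      = (Finset.univ.filter (fun f : Chn (a+1) μ l => f.1 1 = σ)).card := by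
    rw [nchains, Nat.card_eq_fintype_card, Fintype.card_congr e.symm, Fintype.card_subtype]
  rw [h2]

/-! ### skewDim lemmas -/

instance (μ ν : YoungDiagram) : Decidable (Covers μ ν) :=
  decidable_of_iff (ν ∈ covA μ) mem_covA

lemma skewDim_self (μ : YoungDiagram) : μ.skewDim μ = 1 := by
  rw [skewDim_eq_nchains, Nat.sub_self, nchains_zero, if_pos rfl]

lemma skewDim_of_ne {μ l : YoungDiagram} (h : μ ≠ l) (hc : l.card ≤ μ.card) :
    μ.skewDim l = 0 := by
  rw [skewDim_eq_nchains, Nat.sub_eq_zero_of_le hc, nchains_zero, if_neg h]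

lemma skewDim_rec {μ l : YoungDiagram} (h : μ.card < l.card) :
    μ.skewDim l = ∑ σ ∈ covA μ, σ.skewDim l := by
  have hk : l.card - μ.card = (l.card - μ.card - 1) + 1 := by omega
  rw [skewDim_eq_nchains, hk, nchains_succ]
  refine Finset.sum_congr rfl fun σ hσ => ?_
  have hσc : σ.card = μ.card + 1 := (mem_covA.1 hσ).2
  rw [skewDim_eq_nchains]
  congr 1
  omega

lemma skewDim_cover {μ ν : YoungDiagram} (hc : ν.card = μ.card + 1) :
    μ.skewDim ν = if Covers μ ν then 1 else 0 := by
  rw [skewDim_rec (by omega)]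
  have : ∀ σ ∈ covA μ, σ.skewDim ν = if σ = ν then 1 else 0 := by
    intro σ hσ
    have hσc : σ.card = μ.card + 1 := (mem_covA.1 hσ).2
    split_ifs with h
    · rw [h, skewDim_self]
    · exact skewDim_of_ne h (by omega)
  rw [Finset.sum_congr rfl this, Finset.sum_ite_eq' (covA μ) ν (fun _ => 1)]
  exact if_congr mem_covA rfl rfl

/-! ### Sums over covers as sums over rows -/

lemma addBox_inj {μ : YoungDiagram} {i j : ℕ} (hi : μ.AddableRow i) (hj : μ.AddableRow j)
    (h : μ.addBox i = μ.addBox j) : i = j := by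
  by_contra hne
  have h1 : (i, μ.rowLen i) ∈ μ.addBox i := by
    rw [← mem_cells, cells_addBox hi]; exact Finset.mem_insert_self _ _
  rw [h, ← mem_cells, cells_addBox hj] at h1
  rcases Finset.mem_insert.1 h1 with h1 | h1
  · exact hne (by injection h1)
  · exact μ.new_cell_notMem i ((mem_cells _).1 h1)

lemma delBox_inj {μ : YoungDiagram} {i j : ℕ} (hi : μ.RemovableRow i) (hj : μ.RemovableRow j)
    (h : μ.delBox i = μ.delBox j) : i = j := by
  by_contra hne
  have h1 : (i, μ.rowLen i - 1) ∉ μ.delBox i := by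
    rw [← mem_cells, cells_delBox hi]
    simp
  rw [h, ← mem_cells, cells_delBox hj] at h1
  exact h1 (Finset.mem_erase.2 ⟨by simp [Prod.mk.injEq]; intro h'; exact absurd h' hne,
    (mem_cells _).2 (del_cell_mem hi)⟩)

lemma poch_addBox (w : ℂ) {μ : YoungDiagram} {i : ℕ} (h : μ.AddableRow i) :
    poch w μ (μ.addBox i) = w + (μ.rowLen i : ℂ) - (i : ℂ) := by
  rw [poch, cells_addBox h,
    Finset.insert_sdiff_cancel (by simpa [mem_cells] using μ.new_cell_notMem i),
    Finset.prod_singleton]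

lemma poch_delBox (w : ℂ) {μ : YoungDiagram} {i : ℕ} (h : μ.RemovableRow i) :
    poch w (μ.delBox i) μ = w + ((μ.rowLen i - 1 : ℕ) : ℂ) - (i : ℂ) := by
  rw [poch, cells_delBox h]
  have : μ.cells \ μ.cells.erase (i, μ.rowLen i - 1) = {(i, μ.rowLen i - 1)} := by
    rw [Finset.sdiff_erase ((mem_cells _).2 (del_cell_mem h)), Finset.sdiff_self]
    rfl
  rw [this, Finset.prod_singleton]

lemma sum_covA (μ : YoungDiagram) (F : YoungDiagram → ℂ) :
    ∑ σ ∈ covA μ, F σ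
      = ∑ i ∈ (Finset.range (μ.card + 1)).filter (fun i => μ.AddableRow i), F (μ.addBox i) := by
  rw [covA, Finset.sum_image]
  intro i hi j hj h
  exact addBox_inj (Finset.mem_filter.1 hi).2 (Finset.mem_filter.1 hj).2 h

lemma sum_covD (μ : YoungDiagram) (F : YoungDiagram → ℂ) :
    ∑ τ ∈ covD μ, F τ
      = ∑ i ∈ (Finset.range (μ.card + 1)).filter (fun i => μ.RemovableRow i), F (μ.delBox i) := by
  rw [covD, Finset.sum_image]
  intro i hi j hj h
  exact delBox_inj (Finset.mem_filter.1 hi).2 (Finset.mem_filter.1 hj).2 h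

lemma card_eq_sum_rowLen (μ : YoungDiagram) {N : ℕ} (h : μ.colLen 0 ≤ N) :
    μ.card = ∑ i ∈ Finset.range N, μ.rowLen i := by
  have hcells : μ.cells = (Finset.range N).biUnion (fun i => μ.row i) := by
    ext ⟨i, j⟩
    simp only [Finset.mem_biUnion, Finset.mem_range, mem_row_iff, mem_cells]
    constructor
    · intro hm
      have : i < μ.colLen j := mem_iff_lt_colLen.1 hm
      have := μ.colLen_anti 0 j (by omega)
      exact ⟨i, by omega, hm, rfl⟩
    · rintro ⟨r, _, hm, rfl⟩; exact hm
  show μ.cells.card = _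
  rw [hcells, Finset.card_biUnion]
  · exact Finset.sum_congr rfl fun i _ => (μ.rowLen_eq_card (i := i)).symm
  · intro x _ y _ hxy
    simp only [Finset.disjoint_left, mem_row_iff]
    rintro c hc hc'
    exact hxy (hc.2 ▸ hc'.2 ▸ rfl)

/-! ### The corner lemma -/

private noncomputable def gp (z z' : ℂ) (μ : YoungDiagram) (i : ℕ) : ℂ :=
  (z + (μ.rowLen i : ℂ) - (i : ℂ)) * (z' + (μ.rowLen i : ℂ) - (i : ℂ))

private noncomputable def hp (z z' : ℂ) (μ : YoungDiagram) (i : ℕ) : ℂ :=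
  (z + (μ.rowLen i : ℂ) - 1 - (i : ℂ)) * (z' + (μ.rowLen i : ℂ) - 1 - (i : ℂ))

private noncomputable def vp (z z' : ℂ) (μ : YoungDiagram) (i : ℕ) : ℂ :=
  if μ.AddableRow i then 0 else gp z z' μ i

lemma not_addable_card_succ (μ : YoungDiagram) : ¬ μ.AddableRow (μ.card + 1) := by
  rintro (h | h)
  · omega
  · have h0 := μ.rowLen_card_eq_zero
    have h1 := μ.rowLen_anti μ.card (μ.card + 1) (by omega)
    simp only [Nat.add_sub_cancel] at h
    omega

lemma corner (z z' : ℂ) (μ : YoungDiagram) :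
    ∑ σ ∈ covA μ, poch z μ σ * poch z' μ σ
      = ∑ τ ∈ covD μ, poch z τ μ * poch z' τ μ + (z * z' + 2 * (μ.card : ℂ)) := by
  have hA : ∑ σ ∈ covA μ, poch z μ σ * poch z' μ σ
      = ∑ i ∈ (Finset.range (μ.card + 1)).filter (fun i => μ.AddableRow i), gp z z' μ i := by
    rw [sum_covA]
    refine Finset.sum_congr rfl fun i hi => ?_
    rw [poch_addBox z (Finset.mem_filter.1 hi).2, poch_addBox z' (Finset.mem_filter.1 hi).2, gp]
  have hB : ∑ τ ∈ covD μ, poch z τ μ * poch z' τ μ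
      = ∑ i ∈ (Finset.range (μ.card + 1)).filter (fun i => μ.RemovableRow i), hp z z' μ i := by
    rw [sum_covD]
    refine Finset.sum_congr rfl fun i hi => ?_
    have hrem := (Finset.mem_filter.1 hi).2
    have h1 : 1 ≤ μ.rowLen i := by unfold RemovableRow at hrem; omega
    rw [poch_delBox z hrem, poch_delBox z' hrem, hp]
    have hc : ((μ.rowLen i - 1 : ℕ) : ℂ) = (μ.rowLen i : ℂ) - 1 := by
      push_cast [h1]; ring
    rw [hc]; ring
  have key : ∀ i, (if μ.AddableRow i then gp z z' μ i else 0)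
        - (if μ.RemovableRow i then hp z z' μ i else 0)
      = (gp z z' μ i - hp z z' μ i) + (vp z z' μ (i+1) - vp z z' μ i) := by
    intro i
    by_cases hq : μ.RemovableRow i
    · have hp1 : μ.AddableRow (i+1) := Or.inr hq
      by_cases hpa : μ.AddableRow i <;> simp [vp, hpa, hp1, hq] <;> ring
    · have hle := μ.rowLen_anti i (i+1) (by omega)
      have heq : μ.rowLen (i+1) = μ.rowLen i := by unfold RemovableRow at hq; omega
      have hp1 : ¬ μ.AddableRow (i+1) := by
        rintro (hc | hc)
        · omega
        · simp only [Nat.add_sub_cancel] at hc; omega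
      have hgh : gp z z' μ (i+1) = hp z z' μ i := by
        rw [gp, hp, heq]
        push_cast
        ring
      by_cases hpa : μ.AddableRow i <;> simp [vp, hpa, hp1, hq, hgh] <;> ring
  have tele : ∑ i ∈ Finset.range (μ.card + 1), (vp z z' μ (i+1) - vp z z' μ i)
      = vp z z' μ (μ.card + 1) - vp z z' μ 0 := Finset.sum_range_sub _ _
  have hv0 : vp z z' μ 0 = 0 := by rw [vp, if_pos (show μ.AddableRow 0 from Or.inl rfl)]
  have hvm : vp z z' μ (μ.card + 1)
      = (z - ((μ.card : ℂ) + 1)) * (z' - ((μ.card : ℂ) + 1)) := by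
    rw [vp, if_neg μ.not_addable_card_succ, gp]
    have h0 : μ.rowLen (μ.card + 1) = 0 := by
      have h1 := μ.rowLen_anti μ.card (μ.card + 1) (by omega)
      have := μ.rowLen_card_eq_zero
      omega
    rw [h0]
    push_cast
    ring
  have hRs : ∑ i ∈ Finset.range (μ.card + 1), (μ.rowLen i : ℂ) = (μ.card : ℂ) := by
    have h1 := μ.card_eq_sum_rowLen (N := μ.card + 1)
      (le_trans μ.colLen_zero_le_card (by omega))
    rw [← Nat.cast_sum]
    exact_mod_cast congrArg (fun n : ℕ => (n : ℂ)) h1.symm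
  have hIs : (2 : ℂ) * ∑ i ∈ Finset.range (μ.card + 1), (i : ℂ) = (μ.card : ℂ) * ((μ.card : ℂ) + 1) := by
    have h1 := Finset.sum_range_id_mul_two (μ.card + 1)
    have h2 : ((∑ i ∈ Finset.range (μ.card + 1), i) * 2 : ℕ) = ((μ.card + 1) * μ.card : ℕ) := by
      rw [h1]; simp
    have h3 := congrArg (fun n : ℕ => (n : ℂ)) h2
    push_cast at h3
    linear_combination h3
  have hgh : ∑ i ∈ Finset.range (μ.card + 1), (gp z z' μ i - hp z z' μ i)
      = 2 * (μ.card : ℂ) - 2 * (∑ i ∈ Finset.range (μ.card + 1), (i : ℂ))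
        + ((μ.card : ℂ) + 1) * (z + z' - 1) := by
    have hpt : ∀ i ∈ Finset.range (μ.card + 1), gp z z' μ i - hp z z' μ i
        = 2 * (μ.rowLen i : ℂ) - 2 * (i : ℂ) + (z + z' - 1) := by
      intro i _; rw [gp, hp]; ring
    rw [Finset.sum_congr rfl hpt, Finset.sum_add_distrib, Finset.sum_sub_distrib,
      ← Finset.mul_sum, ← Finset.mul_sum, hRs, Finset.sum_const, Finset.card_range]
    push_cast
    ring
  have hsum : (∑ i ∈ (Finset.range (μ.card + 1)).filter (fun i => μ.AddableRow i), gp z z' μ i)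
      - (∑ i ∈ (Finset.range (μ.card + 1)).filter (fun i => μ.RemovableRow i), hp z z' μ i)
      = ∑ i ∈ Finset.range (μ.card + 1), (gp z z' μ i - hp z z' μ i)
        + (vp z z' μ (μ.card + 1) - vp z z' μ 0) := by
    rw [Finset.sum_filter, Finset.sum_filter, ← Finset.sum_sub_distrib,
      Finset.sum_congr rfl (fun i _ => key i), Finset.sum_add_distrib, tele]
  rw [hA, hB]
  rw [hgh, hv0, hvm] at hsum
  linear_combination hsum - hIs

/-! ### Lattice surgery for covers -/

lemma eq_of_le_of_card_le {μ ν : YoungDiagram} (h : μ ≤ ν) (hc : ν.card ≤ μ.card) : μ = ν :=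
  YoungDiagram.ext (Finset.eq_of_subset_of_card_le (cells_subset_iff.2 h) hc)

lemma card_sup_add_card_inf (μ ν : YoungDiagram) :
    (μ ⊔ ν).card + (μ ⊓ ν).card = μ.card + ν.card := by
  show (μ ⊔ ν).cells.card + (μ ⊓ ν).cells.card = _
  rw [cells_sup, cells_inf]
  exact Finset.card_union_add_card_inter _ _

lemma card_le_of_le {μ ν : YoungDiagram} (h : μ ≤ ν) : μ.card ≤ ν.card :=
  Finset.card_le_card (cells_subset_iff.2 h)

/-- If `ρ` covers two distinct diagrams `μ, τ`, then `μ ⊓ τ` is covered by both and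
`μ ⊔ τ = ρ`. -/
lemma diamond_down {μ τ ρ : YoungDiagram} (hμ : Covers μ ρ) (hτ : Covers τ ρ) (hne : τ ≠ μ) :
    Covers (μ ⊓ τ) μ ∧ Covers (μ ⊓ τ) τ ∧ μ ⊔ τ = ρ := by
  have hc1 : μ.card = τ.card := by have h2 := hμ.2; have h3 := hτ.2; omega
  have hsup_le : μ ⊔ τ ≤ ρ := sup_le hμ.1 hτ.1
  have hlt : μ.card < (μ ⊔ τ).card := by
    rcases lt_or_ge μ.card (μ ⊔ τ).card with h | hle
    · exact h
    · exfalso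
      have h2 : μ = μ ⊔ τ := eq_of_le_of_card_le le_sup_left hle
      have hτμ : τ ≤ μ := le_sup_right.trans h2.ge
      exact hne (eq_of_le_of_card_le hτμ hc1.le)
  have hsup : μ ⊔ τ = ρ := eq_of_le_of_card_le hsup_le (by have := hμ.2; omega)
  have h4 := card_sup_add_card_inf μ τ
  have h5 : (μ ⊔ τ).card = ρ.card := by rw [hsup]
  have h6 := hμ.2
  refine ⟨⟨inf_le_left, by omega⟩, ⟨inf_le_right, by omega⟩, hsup⟩

/-- If `π` is covered by two distinct diagrams `μ, τ`, then `μ ⊔ τ` covers both and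
`μ ⊓ τ = π`. -/
lemma diamond_up {π μ τ : YoungDiagram} (hμ : Covers π μ) (hτ : Covers π τ) (hne : τ ≠ μ) :
    Covers μ (μ ⊔ τ) ∧ Covers τ (μ ⊔ τ) ∧ μ ⊓ τ = π := by
  have hc1 : μ.card = τ.card := by have h2 := hμ.2; have h3 := hτ.2; omega
  have hle : π ≤ μ ⊓ τ := le_inf hμ.1 hτ.1
  have hlt : (μ ⊓ τ).card < μ.card := by
    rcases lt_or_ge (μ ⊓ τ).card μ.card with h | hge
    · exact h
    · exfalso
      have h2 : μ ⊓ τ = μ := eq_of_le_of_card_le inf_le_left hge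
      have hμτ : μ ≤ τ := h2.ge.trans inf_le_right
      exact hne (eq_of_le_of_card_le hμτ hc1.ge).symm
  have hinf : μ ⊓ τ = π := by
    refine (eq_of_le_of_card_le hle ?_).symm
    have := hμ.2; omega
  have h4 := card_sup_add_card_inf μ τ
  have h5 : (μ ⊓ τ).card = π.card := by rw [hinf]
  have h6 := hμ.2
  refine ⟨⟨le_sup_left, by omega⟩, ⟨le_sup_right, by omega⟩, hinf⟩

lemma poch_sup_inf (w : ℂ) (μ τ : YoungDiagram) :
    poch w τ (μ ⊔ τ) = poch w (μ ⊓ τ) μ := by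
  rw [poch, poch, cells_sup, cells_inf, Finset.union_sdiff_right, Finset.sdiff_inter_self_left]

/-! ### The main induction -/

lemma main_identity (z z' : ℂ) :
    ∀ K : ℕ, ∀ μ l : YoungDiagram, l.card = μ.card + K →
      ∑ σ ∈ covA l, poch z l σ * poch z' l σ * (μ.skewDim σ : ℂ)
        = ∑ τ ∈ covD μ, poch z τ μ * poch z' τ μ * (τ.skewDim l : ℂ)
          + ((l.card : ℂ) + z * z' + (μ.card : ℂ)) * ((l.card : ℂ) - (μ.card : ℂ) + 1)
            * (μ.skewDim l : ℂ) := by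
  intro K
  induction K with
  | zero =>
    intro μ l hcard
    rw [Nat.add_zero] at hcard
    by_cases hμl : μ = l
    · subst hμl
      have hL : ∑ σ ∈ covA μ, poch z μ σ * poch z' μ σ * (μ.skewDim σ : ℂ)
          = ∑ σ ∈ covA μ, poch z μ σ * poch z' μ σ := by
        refine Finset.sum_congr rfl fun σ hσ => ?_
        rw [skewDim_cover (mem_covA.1 hσ).2, if_pos (mem_covA.1 hσ)]
        simp
      have hR : ∑ τ ∈ covD μ, poch z τ μ * poch z' τ μ * (τ.skewDim μ : ℂ)
          = ∑ τ ∈ covD μ, poch z τ μ * poch z' τ μ := by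
        refine Finset.sum_congr rfl fun τ hτ => ?_
        rw [skewDim_cover (mem_covD.1 hτ).2, if_pos (mem_covD.1 hτ)]
        simp
      rw [hL, hR, skewDim_self]
      push_cast
      linear_combination corner z z' μ
    · -- same size, distinct diagrams
      have hm1 : μ.card ≠ 0 := by
        intro h0
        have hl0 : l.card = 0 := by omega
        apply hμl
        have : μ.cells = ∅ := Finset.card_eq_zero.1 h0
        have hl : l.cells = ∅ := Finset.card_eq_zero.1 hl0
        exact YoungDiagram.ext (by rw [this, hl])
      have hD0 : μ.skewDim l = 0 := skewDim_of_ne hμl (le_of_eq hcard)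
      have hL : ∑ σ ∈ covA l, poch z l σ * poch z' l σ * (μ.skewDim σ : ℂ)
          = ∑ σ ∈ (covA l).filter (fun σ => Covers μ σ), poch z l σ * poch z' l σ := by
        rw [Finset.sum_filter]
        refine Finset.sum_congr rfl fun σ hσ => ?_
        have hσc := (mem_covA.1 hσ).2
        rw [skewDim_cover (by omega)]
        split_ifs <;> simp
      have hR : ∑ τ ∈ covD μ, poch z τ μ * poch z' τ μ * (τ.skewDim l : ℂ)
          = ∑ τ ∈ (covD μ).filter (fun τ => Covers τ l), poch z τ μ * poch z' τ μ := by
        rw [Finset.sum_filter]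
        refine Finset.sum_congr rfl fun τ hτ => ?_
        have hτc := (mem_covD.1 hτ).2
        rw [skewDim_cover (by omega)]
        split_ifs <;> simp
      rw [hL, hR, hD0]
      rw [Nat.cast_zero, mul_zero, add_zero]
      refine Finset.sum_bij' (fun σ _ => μ ⊓ l) (fun τ _ => μ ⊔ l) ?_ ?_ ?_ ?_ ?_
      · intro σ hσ
        obtain ⟨hσA, hσμ⟩ := Finset.mem_filter.1 hσ
        obtain ⟨h1, h2, h3⟩ := diamond_down hσμ (mem_covA.1 hσA) (Ne.symm hμl)
        exact Finset.mem_filter.2 ⟨mem_covD.2 h1, h2⟩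
      · intro τ hτ
        obtain ⟨hτD, hτl⟩ := Finset.mem_filter.1 hτ
        obtain ⟨h1, h2, h3⟩ := diamond_up (mem_covD.1 hτD) hτl (Ne.symm hμl)
        exact Finset.mem_filter.2 ⟨mem_covA.2 h2, h1⟩
      · intro σ hσ
        obtain ⟨hσA, hσμ⟩ := Finset.mem_filter.1 hσ
        exact (diamond_down hσμ (mem_covA.1 hσA) (Ne.symm hμl)).2.2
      · intro τ hτ
        obtain ⟨hτD, hτl⟩ := Finset.mem_filter.1 hτ
        exact (diamond_up (mem_covD.1 hτD) hτl (Ne.symm hμl)).2.2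
      · intro σ hσ
        obtain ⟨hσA, hσμ⟩ := Finset.mem_filter.1 hσ
        obtain ⟨h1, h2, h3⟩ := diamond_down hσμ (mem_covA.1 hσA) (Ne.symm hμl)
        beta_reduce
        rw [← h3, poch_sup_inf z μ l, poch_sup_inf z' μ l]
  | succ K ih =>
    intro μ l hcard
    have hml : μ.card < l.card := by omega
    -- Step 1: expand the dimension by the first step of the chain, and swap sums
    have hswap : ∑ σ ∈ covA l, poch z l σ * poch z' l σ * (μ.skewDim σ : ℂ)
        = ∑ ρ ∈ covA μ, ∑ σ ∈ covA l, poch z l σ * poch z' l σ * (ρ.skewDim σ : ℂ) := by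
      have h1 : ∀ σ ∈ covA l, poch z l σ * poch z' l σ * (μ.skewDim σ : ℂ)
          = ∑ ρ ∈ covA μ, poch z l σ * poch z' l σ * (ρ.skewDim σ : ℂ) := by
        intro σ hσ
        have hσc := (mem_covA.1 hσ).2
        rw [skewDim_rec (show μ.card < σ.card by omega), Nat.cast_sum, Finset.mul_sum]
      rw [Finset.sum_congr rfl h1, Finset.sum_comm]
    -- Step 2: apply the induction hypothesis to each ρ
    have happ : ∀ ρ ∈ covA μ, ∑ σ ∈ covA l, poch z l σ * poch z' l σ * (ρ.skewDim σ : ℂ)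
        = ∑ τ ∈ covD ρ, poch z τ ρ * poch z' τ ρ * (τ.skewDim l : ℂ)
          + ((l.card : ℂ) + z * z' + ((μ.card : ℂ) + 1))
            * ((l.card : ℂ) - ((μ.card : ℂ) + 1) + 1) * (ρ.skewDim l : ℂ) := by
      intro ρ hρ
      have hρc := (mem_covA.1 hρ).2
      have hih := ih ρ l (by omega)
      rw [show ((ρ.card : ℕ) : ℂ) = (μ.card : ℂ) + 1 by rw [hρc]; push_cast; ring] at hih
      exact hih
    have hDrec : ((μ.skewDim l : ℕ) : ℂ) = ∑ ρ ∈ covA μ, (ρ.skewDim l : ℂ) := by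
      rw [skewDim_rec hml, Nat.cast_sum]
    have e1 : ∑ σ ∈ covA l, poch z l σ * poch z' l σ * (μ.skewDim σ : ℂ)
        = (∑ ρ ∈ covA μ, ∑ τ ∈ covD ρ, poch z τ ρ * poch z' τ ρ * (τ.skewDim l : ℂ))
          + ((l.card : ℂ) + z * z' + ((μ.card : ℂ) + 1))
            * ((l.card : ℂ) - ((μ.card : ℂ) + 1) + 1) * (μ.skewDim l : ℂ) := by
      rw [hswap, Finset.sum_congr rfl happ, Finset.sum_add_distrib, ← Finset.mul_sum, ← hDrec]
    -- Step 3: split the inner sum at τ = μ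
    have e2 : ∑ ρ ∈ covA μ, ∑ τ ∈ covD ρ, poch z τ ρ * poch z' τ ρ * (τ.skewDim l : ℂ)
        = (∑ ρ ∈ covA μ, poch z μ ρ * poch z' μ ρ) * (μ.skewDim l : ℂ)
          + ∑ ρ ∈ covA μ, ∑ τ ∈ (covD ρ).erase μ,
              poch z τ ρ * poch z' τ ρ * (τ.skewDim l : ℂ) := by
      have h1 : ∀ ρ ∈ covA μ, ∑ τ ∈ covD ρ, poch z τ ρ * poch z' τ ρ * (τ.skewDim l : ℂ)
          = poch z μ ρ * poch z' μ ρ * (μ.skewDim l : ℂ)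
            + ∑ τ ∈ (covD ρ).erase μ, poch z τ ρ * poch z' τ ρ * (τ.skewDim l : ℂ) := by
        intro ρ hρ
        exact (Finset.add_sum_erase _ _ (mem_covD.2 (mem_covA.1 hρ))).symm
      rw [Finset.sum_congr rfl h1, Finset.sum_add_distrib, ← Finset.sum_mul]
    -- Step 4: reindex the double sum via the diamond bijection
    have e3 : ∑ ρ ∈ covA μ, ∑ τ ∈ (covD ρ).erase μ,
          poch z τ ρ * poch z' τ ρ * (τ.skewDim l : ℂ)
        = ∑ π ∈ covD μ, ∑ τ ∈ (covA π).erase μ,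
            poch z π μ * poch z' π μ * (τ.skewDim l : ℂ) := by
      rw [Finset.sum_sigma' (covA μ) (fun ρ => (covD ρ).erase μ),
        Finset.sum_sigma' (covD μ) (fun π => (covA π).erase μ)]
      refine Finset.sum_bij' (fun p hp => ⟨μ ⊓ p.2, p.2⟩) (fun p hp => ⟨μ ⊔ p.2, p.2⟩)
        ?_ ?_ ?_ ?_ ?_
      · rintro ⟨ρ, τ⟩ hp
        obtain ⟨hρ, hτ⟩ := Finset.mem_sigma.1 hp
        obtain ⟨hτne, hτρ⟩ := Finset.mem_erase.1 hτ
        obtain ⟨h1, h2, h3⟩ := diamond_down (mem_covA.1 hρ) (mem_covD.1 hτρ) hτne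
        exact Finset.mem_sigma.2 ⟨mem_covD.2 h1, Finset.mem_erase.2 ⟨hτne, mem_covA.2 h2⟩⟩
      · rintro ⟨π, τ⟩ hp
        obtain ⟨hπ, hτ⟩ := Finset.mem_sigma.1 hp
        obtain ⟨hτne, hτπ⟩ := Finset.mem_erase.1 hτ
        obtain ⟨h1, h2, h3⟩ := diamond_up (mem_covD.1 hπ) (mem_covA.1 hτπ) hτne
        exact Finset.mem_sigma.2 ⟨mem_covA.2 h1, Finset.mem_erase.2 ⟨hτne, mem_covD.2 h2⟩⟩
      · rintro ⟨ρ, τ⟩ hp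
        obtain ⟨hρ, hτ⟩ := Finset.mem_sigma.1 hp
        obtain ⟨hτne, hτρ⟩ := Finset.mem_erase.1 hτ
        obtain ⟨h1, h2, h3⟩ := diamond_down (mem_covA.1 hρ) (mem_covD.1 hτρ) hτne
        exact Sigma.ext h3 (heq_of_eq rfl)
      · rintro ⟨π, τ⟩ hp
        obtain ⟨hπ, hτ⟩ := Finset.mem_sigma.1 hp
        obtain ⟨hτne, hτπ⟩ := Finset.mem_erase.1 hτ
        obtain ⟨h1, h2, h3⟩ := diamond_up (mem_covD.1 hπ) (mem_covA.1 hτπ) hτne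
        exact Sigma.ext h3 (heq_of_eq rfl)
      · rintro ⟨ρ, τ⟩ hp
        obtain ⟨hρ, hτ⟩ := Finset.mem_sigma.1 hp
        obtain ⟨hτne, hτρ⟩ := Finset.mem_erase.1 hτ
        obtain ⟨h1, h2, h3⟩ := diamond_down (mem_covA.1 hρ) (mem_covD.1 hτρ) hτne
        beta_reduce
        rw [← h3, poch_sup_inf z μ τ, poch_sup_inf z' μ τ]
    -- Step 5: evaluate the inner sums
    have e4 : ∑ π ∈ covD μ, ∑ τ ∈ (covA π).erase μ,
          poch z π μ * poch z' π μ * (τ.skewDim l : ℂ)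
        = (∑ π ∈ covD μ, poch z π μ * poch z' π μ * (π.skewDim l : ℂ))
          - (∑ π ∈ covD μ, poch z π μ * poch z' π μ) * (μ.skewDim l : ℂ) := by
      have h1 : ∀ π ∈ covD μ, ∑ τ ∈ (covA π).erase μ,
            poch z π μ * poch z' π μ * (τ.skewDim l : ℂ)
          = poch z π μ * poch z' π μ * (π.skewDim l : ℂ)
            - poch z π μ * poch z' π μ * (μ.skewDim l : ℂ) := by
        intro π hπ
        have hπμ := mem_covD.1 hπ
        have hπc := hπμ.2
        have hπrec : ((π.skewDim l : ℕ) : ℂ) = ∑ τ ∈ covA π, (τ.skewDim l : ℂ) := by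
          rw [skewDim_rec (show π.card < l.card by omega), Nat.cast_sum]
        rw [← Finset.mul_sum, Finset.sum_erase_eq_sub (mem_covA.2 hπμ), ← hπrec]
        ring
      rw [Finset.sum_congr rfl h1, Finset.sum_sub_distrib, ← Finset.sum_mul]
    -- Conclusion
    linear_combination e1 + e2 + e3 + e4 + (μ.skewDim l : ℂ) * corner z z' μ


end YoungDiagram

open YoungDiagram in
/-- The combinatorial identity (4.3): for all `z, z' ∈ ℂ` and Young
diagrams `μ, λ` with `m = |μ| ≥ 1`, `n = |λ|`:
`∑_{λ• ↘ λ} (z)_{λ•/λ}(z')_{λ•/λ} dim(μ,λ•)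
  = ∑_{μ• ↗ μ} (z)_{μ/μ•}(z')_{μ/μ•} dim(μ•,λ) + (n + zz' + m)(n - m + 1) dim(μ,λ)`. -/
theorem updown_combinatorial_identity (z z' : ℂ) (μ l : YoungDiagram) (m n : ℕ)
    (hm : μ.card = m) (hm1 : 1 ≤ m) (hn : l.card = n) :
    ∑ᶠ (ν : YoungDiagram) (_ : Covers l ν),
        poch z l ν * poch z' l ν * (μ.skewDim ν : ℂ)
      = (∑ᶠ (κ : YoungDiagram) (_ : Covers κ μ),
            poch z κ μ * poch z' κ μ * (κ.skewDim l : ℂ))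
        + ((n : ℂ) + z * z' + (m : ℂ)) * ((n : ℂ) - (m : ℂ) + 1) * (μ.skewDim l : ℂ) := by
  subst hm hn
  have hfin1 : (∑ᶠ (ν : YoungDiagram) (_ : Covers l ν),
      poch z l ν * poch z' l ν * (μ.skewDim ν : ℂ))
      = ∑ ν ∈ covA l, poch z l ν * poch z' l ν * (μ.skewDim ν : ℂ) :=
    finsum_cond_eq_sum_of_cond_iff _ (fun {x} _ => mem_covA.symm)
  have hfin2 : (∑ᶠ (κ : YoungDiagram) (_ : Covers κ μ),
      poch z κ μ * poch z' κ μ * (κ.skewDim l : ℂ))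
      = ∑ κ ∈ covD μ, poch z κ μ * poch z' κ μ * (κ.skewDim l : ℂ) :=
    finsum_cond_eq_sum_of_cond_iff _ (fun {x} _ => mem_covD.symm)
  rw [hfin1, hfin2]
  rcases le_or_gt μ.card l.card with hle | hgt
  · exact main_identity z z' (l.card - μ.card) μ l (by omega)
  rcases eq_or_lt_of_le (Nat.succ_le_of_lt hgt) with heq | hlt2
  · -- μ.card = l.card + 1
    have hD0 : μ.skewDim l = 0 := skewDim_of_ne (by rintro rfl; omega) (by omega)
    have hL : ∑ ν ∈ covA l, poch z l ν * poch z' l ν * (μ.skewDim ν : ℂ)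
        = ∑ ν ∈ covA l, (if μ = ν then poch z l ν * poch z' l ν else 0) := by
      refine Finset.sum_congr rfl fun ν hν => ?_
      have hνc := (mem_covA.1 hν).2
      by_cases h : μ = ν
      · rw [← h, skewDim_self]; simp [h]
      · rw [skewDim_of_ne h (by omega)]; simp [h]
    have hR : ∑ κ ∈ covD μ, poch z κ μ * poch z' κ μ * (κ.skewDim l : ℂ)
        = ∑ κ ∈ covD μ, (if κ = l then poch z κ μ * poch z' κ μ else 0) := by
      refine Finset.sum_congr rfl fun κ hκ => ?_
      have hκc := (mem_covD.1 hκ).2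
      by_cases h : κ = l
      · rw [h, skewDim_self]; simp [h]
      · rw [skewDim_of_ne h (by omega)]; simp [h]
    rw [hL, hR, Finset.sum_ite_eq, Finset.sum_ite_eq', hD0]
    rw [Nat.cast_zero, mul_zero, add_zero]
    have hiff : μ ∈ covA l ↔ l ∈ covD μ := by rw [mem_covA, mem_covD]
    by_cases hc : μ ∈ covA l
    · rw [if_pos hc, if_pos (hiff.1 hc)]
    · rw [if_neg hc, if_neg (fun h => hc (hiff.2 h))]
  · -- μ.card > l.card + 1 : everything vanishes
    have hD0 : μ.skewDim l = 0 := skewDim_of_ne (by rintro rfl; omega) (by omega)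
    have hL : ∀ ν ∈ covA l, poch z l ν * poch z' l ν * (μ.skewDim ν : ℂ) = 0 := by
      intro ν hν
      have hνc := (mem_covA.1 hν).2
      rw [skewDim_of_ne (by rintro rfl; omega) (by omega)]
      simp
    have hR : ∀ κ ∈ covD μ, poch z κ μ * poch z' κ μ * (κ.skewDim l : ℂ) = 0 := by
      intro κ hκ
      have hκc := (mem_covD.1 hκ).2
      rw [skewDim_of_ne (by rintro rfl; omega) (by omega)]
      simp
    rw [Finset.sum_congr rfl hL, Finset.sum_congr rfl hR, hD0]
    simp
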